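/- A finite simple graph G is a disconnected minimal polar obstruction if and only if G is isomorphic to the disjoint union P_3 + H, where H is a minimal monopolar obstruction that is not a minimal polar obstruction. -/

import Mathlib

open SimpleGraph

universe u v

/-! ### Basic predicates -/

/-- `B` induces a disjoint union of complete graphs in `G` (i.e. `G[B]` is a cluster). -/
def IsClusterSet {V : Type*} (G : SimpleGraph V) (B : Set V) : Prop :=
  ∀ ⦃u w x : V⦄, u ∈ B → w ∈ B → x ∈ B → G.Adj u w → G.Adj w x → u ≠ x → G.Adj u x

/-- `A` induces a complete multipartite graph in `G`
(the complement of `G[A]` is a disjoint union of cliques). -/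
def IsCompleteMultipartiteSet {V : Type*} (G : SimpleGraph V) (A : Set V) : Prop :=
  ∀ ⦃u w x : V⦄, u ∈ A → w ∈ A → x ∈ A → u ≠ w → w ≠ x → u ≠ x →
    ¬ G.Adj u w → ¬ G.Adj w x → ¬ G.Adj u x

/-- `A` is an independent set of `G`. -/
def IsIndepSetG {V : Type*} (G : SimpleGraph V) (A : Set V) : Prop :=
  ∀ ⦃u w : V⦄, u ∈ A → w ∈ A → ¬ G.Adj u w

/-- `G[B]` is a disjoint union of at most `k` complete graphs. -/
def IsClusterSetLE {V : Type*} (G : SimpleGraph V) (k : ℕ) (B : Set V) : Prop :=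
  ∃ g : B → Fin k, ∀ u w : B, u ≠ w → (G.Adj u w ↔ g u = g w)

/-- `G[A]` is a complete multipartite graph with at most `s` parts. -/
def IsCompleteMultipartiteSetLE {V : Type*} (G : SimpleGraph V) (s : ℕ) (A : Set V) : Prop :=
  ∃ f : A → Fin s, ∀ u w : A, G.Adj u w ↔ f u ≠ f w

/-! ### Polarity properties -/

/-- `G` is unipolar: a partition `(A, Aᶜ)` with `A` a clique and `G[Aᶜ]` a cluster. -/
def Unipolar {V : Type*} (G : SimpleGraph V) : Prop :=
  ∃ A : Set V, G.IsClique A ∧ IsClusterSet G Aᶜ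

/-- `G` is monopolar ((1,∞)-polar). -/
def Monopolar {V : Type*} (G : SimpleGraph V) : Prop :=
  ∃ A : Set V, IsIndepSetG G A ∧ IsClusterSet G Aᶜ

/-- `G` is polar ((∞,∞)-polar). -/
def Polar {V : Type*} (G : SimpleGraph V) : Prop :=
  ∃ A : Set V, IsCompleteMultipartiteSet G A ∧ IsClusterSet G Aᶜ

/-- `G` is (s,1)-polar. -/
def SOnePolar {V : Type*} (s : ℕ) (G : SimpleGraph V) : Prop :=
  ∃ A : Set V, IsCompleteMultipartiteSetLE G s A ∧ G.IsClique Aᶜ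

/-- `G` is (∞,1)-polar. -/
def InfOnePolar {V : Type*} (G : SimpleGraph V) : Prop :=
  ∃ A : Set V, IsCompleteMultipartiteSet G A ∧ G.IsClique Aᶜ

/-- `G` is (1,k)-polar. -/
def OneKPolar {V : Type*} (k : ℕ) (G : SimpleGraph V) : Prop :=
  ∃ A : Set V, IsIndepSetG G A ∧ IsClusterSetLE G k Aᶜ

/-! ### Minimal obstructions -/

def MinUnipolarObstruction {V : Type*} (G : SimpleGraph V) : Prop :=
  ¬ Unipolar G ∧ ∀ s : Set V, s ≠ Set.univ → Unipolar (G.induce s)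

def MinMonopolarObstruction {V : Type*} (G : SimpleGraph V) : Prop :=
  ¬ Monopolar G ∧ ∀ s : Set V, s ≠ Set.univ → Monopolar (G.induce s)

def MinPolarObstruction {V : Type*} (G : SimpleGraph V) : Prop :=
  ¬ Polar G ∧ ∀ s : Set V, s ≠ Set.univ → Polar (G.induce s)

def MinSOnePolarObstruction {V : Type*} (s : ℕ) (G : SimpleGraph V) : Prop :=
  ¬ SOnePolar s G ∧ ∀ t : Set V, t ≠ Set.univ → SOnePolar s (G.induce t)

def MinInfOnePolarObstruction {V : Type*} (G : SimpleGraph V) : Prop :=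
  ¬ InfOnePolar G ∧ ∀ t : Set V, t ≠ Set.univ → InfOnePolar (G.induce t)

def MinOneKPolarObstruction {V : Type*} (k : ℕ) (G : SimpleGraph V) : Prop :=
  ¬ OneKPolar k G ∧ ∀ t : Set V, t ≠ Set.univ → OneKPolar k (G.induce t)

/-! ### Graph constructions -/

/-- The join of two graphs: all edges added between the summands. -/
def joinG {α β : Type*} (G : SimpleGraph α) (H : SimpleGraph β) : SimpleGraph (α ⊕ β) where
  Adj x y := (G ⊕g H).Adj x y ∨ (x.isLeft ∧ y.isRight) ∨ (x.isRight ∧ y.isLeft)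
  symm := ⟨fun x y h => by
    rcases h with h | ⟨h1, h2⟩ | ⟨h1, h2⟩
    · exact Or.inl (h.symm)
    · exact Or.inr (Or.inr ⟨h2, h1⟩)
    · exact Or.inr (Or.inl ⟨h2, h1⟩)⟩
  loopless := ⟨fun x h => by
    rcases h with h | ⟨h1, h2⟩ | ⟨h1, h2⟩
    · exact (G ⊕g H).loopless.irrefl x h
    · cases x <;> simp_all
    · cases x <;> simp_all⟩

/-- `K_n`, the complete graph on `n` vertices. -/
def KG (n : ℕ) : SimpleGraph (Fin n) := ⊤

/-- `n K_1`, the edgeless graph on `n` vertices. -/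
def EG (n : ℕ) : SimpleGraph (Fin n) := ⊥

/-- The banner graph `P`: a four-cycle `0 1 2 3` with a pendant vertex `4` adjacent to `0`. -/
def banner : SimpleGraph (Fin 5) :=
  SimpleGraph.fromEdgeSet {s(0, 1), s(1, 2), s(2, 3), s(3, 0), s(0, 4)}

/-- The chair (fork) graph `F`: a path `0 1 2 3` with an extra vertex `4` adjacent to `1`. -/
def chair : SimpleGraph (Fin 5) :=
  SimpleGraph.fromEdgeSet {s(0, 1), s(1, 2), s(2, 3), s(1, 4)}

/-- `2P_3`. -/
def twoP3 : SimpleGraph (Fin 3 ⊕ Fin 3) := pathGraph 3 ⊕g pathGraph 3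

/-- `K_{2,3}`. -/
def K23 : SimpleGraph (Fin 2 ⊕ Fin 3) := completeBipartiteGraph (Fin 2) (Fin 3)

/-- The seven graphs `E1, E2, E3, E7, E10, E11, E12`. -/
def E1 : SimpleGraph (Fin 1 ⊕ (Fin 2 ⊕ Fin 2)) := KG 1 ⊕g (KG 2 ⊕g KG 2)
def E2 : SimpleGraph (Fin 3 ⊕ Fin 3) := pathGraph 3 ⊕g pathGraph 3
def E3 : SimpleGraph (Fin 4 ⊕ Fin 2) := cycleGraph 4 ⊕g EG 2
def E7 : SimpleGraph (Fin 1 ⊕ (Fin 3 ⊕ Fin 2)) := KG 1 ⊕g (pathGraph 3 ⊕g KG 2)ᶜ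
def E10 : SimpleGraph (Fin 1 ⊕ Fin 5) := KG 1 ⊕g cycleGraph 5
def E11 : SimpleGraph (Fin 1 ⊕ Fin 5) := KG 1 ⊕g banner
def E12 : SimpleGraph (Fin 1 ⊕ Fin 5) := KG 1 ⊕g (pathGraph 5)ᶜ

/-! ### P4 structure -/

/-- `W` induces a path on four vertices in `G`. -/
def InducesP4 {V : Type*} (G : SimpleGraph V) (W : Set V) : Prop :=
  Nonempty (G.induce W ≃g pathGraph 4)

/-- A graph is a cograph if it has no induced `P_4`. -/
def Cograph {V : Type*} (G : SimpleGraph V) : Prop :=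
  ∀ W : Set V, ¬ InducesP4 G W

/-- `G` is `P_4`-sparse: any five vertices induce at most one `P_4`. -/
def P4Sparse {V : Type*} (G : SimpleGraph V) : Prop :=
  ∀ s : Set V, s.ncard = 5 → ∀ W₁ W₂ : Set V, W₁ ⊆ s → W₂ ⊆ s →
    InducesP4 G W₁ → InducesP4 G W₂ → W₁ = W₂

/-- `G` is `P_4`-extendible. -/
def P4Extendible {V : Type*} (G : SimpleGraph V) : Prop :=
  ∀ W : Set V, InducesP4 G W →
    ∀ v₁ v₂ : V, v₁ ∉ W → v₂ ∉ W →
      (∃ W₁ : Set V, InducesP4 G W₁ ∧ v₁ ∈ W₁ ∧ (W₁ ∩ W).Nonempty) →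
      (∃ W₂ : Set V, InducesP4 G W₂ ∧ v₂ ∈ W₂ ∧ (W₂ ∩ W).Nonempty) → v₁ = v₂

/-! ### Spiders -/

/-- `(S, K, R)` is a spider partition of `G`. -/
def IsSpiderPartition {V : Type*} (G : SimpleGraph V) (S K R : Set V) : Prop :=
  S ∪ K ∪ R = Set.univ ∧ Disjoint S K ∧ Disjoint S R ∧ Disjoint K R ∧
  S.ncard = K.ncard ∧ 2 ≤ K.ncard ∧
  G.IsClique K ∧ IsIndepSetG G S ∧
  (∃ f : S → K, Function.Bijective f ∧
    ((∀ s : S, ∀ k : K, G.Adj s k ↔ (f s : V) = k) ∨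
     (∀ s : S, ∀ k : K, G.Adj s k ↔ (f s : V) ≠ k))) ∧
  (∀ r ∈ R, ∀ k ∈ K, G.Adj r k) ∧
  (∀ r ∈ R, ∀ s ∈ S, ¬ G.Adj r s)

/-- `G` is a `B`-spider with partition `(S, K, R)`, where `B` is a fixed base graph with
midpoint set `M` and endpoint set `E`: `G` is obtained from a copy of `B` (whose midpoints
form `K` and whose endpoints form `S`) by adding the set `R` of vertices, each adjacent to
all midpoints and to no endpoint. -/
def IsBaseSpider {n : ℕ} {V : Type*} (B : SimpleGraph (Fin n)) (M E : Set (Fin n))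
    (G : SimpleGraph V) (S K R : Set V) : Prop :=
  ∃ f : Fin n → V, Function.Injective f ∧
    (∀ i j : Fin n, G.Adj (f i) (f j) ↔ B.Adj i j) ∧
    K = f '' M ∧ S = f '' E ∧ R = (Set.range f)ᶜ ∧
    (∀ r ∈ R, ∀ x ∈ K, G.Adj r x) ∧
    (∀ r ∈ R, ∀ x ∈ S, ¬ G.Adj r x)


section Infra
variable {V W : Type*} {G : SimpleGraph V} {H : SimpleGraph W}

/-- no edges from `s` to `t`. -/
def CrossFree (G : SimpleGraph V) (s t : Set V) : Prop :=
  ∀ ⦃u v : V⦄, u ∈ s → v ∈ t → ¬ G.Adj u v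

def MonopolarOn (G : SimpleGraph V) (s : Set V) : Prop :=
  ∃ A ⊆ s, IsIndepSetG G A ∧ IsClusterSet G (s \ A)

def PolarOn (G : SimpleGraph V) (s : Set V) : Prop :=
  ∃ A ⊆ s, IsCompleteMultipartiteSet G A ∧ IsClusterSet G (s \ A)

lemma IsClusterSet.mono {s t : Set V} (h : t ⊆ s) (hs : IsClusterSet G s) :
    IsClusterSet G t := fun _ _ _ hu hw hx => hs (h hu) (h hw) (h hx)

lemma IsIndepSetG.mono {s t : Set V} (h : t ⊆ s) (hs : IsIndepSetG G s) :
    IsIndepSetG G t := fun _ _ hu hw => hs (h hu) (h hw)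

lemma IsIndepSetG.cm {A : Set V} (h : IsIndepSetG G A) : IsCompleteMultipartiteSet G A :=
  fun _ _ _ hu _ hx _ _ _ _ _ => h hu hx

lemma indep_empty : IsIndepSetG G ∅ := fun _ _ hu _ => absurd hu (Set.notMem_empty _)

lemma MonopolarOn.polarOn {s : Set V} (h : MonopolarOn G s) : PolarOn G s := by
  obtain ⟨A, hA, hi, hc⟩ := h
  exact ⟨A, hA, hi.cm, hc⟩

lemma IsClusterSet.monopolarOn {s : Set V} (h : IsClusterSet G s) : MonopolarOn G s :=
  ⟨∅, Set.empty_subset _, indep_empty, by simpa using h⟩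

lemma polar_iff_polarOn_univ : Polar G ↔ PolarOn G Set.univ := by
  constructor
  · rintro ⟨A, h1, h2⟩
    exact ⟨A, Set.subset_univ _, h1, by rwa [← Set.compl_eq_univ_diff]⟩
  · rintro ⟨A, _, h1, h2⟩
    exact ⟨A, h1, by rwa [Set.compl_eq_univ_diff]⟩

lemma monopolar_iff_monopolarOn_univ : Monopolar G ↔ MonopolarOn G Set.univ := by
  constructor
  · rintro ⟨A, h1, h2⟩
    exact ⟨A, Set.subset_univ _, h1, by rwa [← Set.compl_eq_univ_diff]⟩
  · rintro ⟨A, _, h1, h2⟩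
    exact ⟨A, h1, by rwa [Set.compl_eq_univ_diff]⟩

lemma Monopolar.polar (h : Monopolar G) : Polar G := by
  obtain ⟨A, h1, h2⟩ := h; exact ⟨A, h1.cm, h2⟩

section MapLemmas
variable (f : W → V) (hf : Function.Injective f)
  (hadj : ∀ a b : W, G.Adj (f a) (f b) ↔ H.Adj a b)

include hf hadj in
lemma monopolarOn_map (t : Set W) : MonopolarOn G (f '' t) ↔ MonopolarOn H t := by
  constructor
  · rintro ⟨B, hBsub, hBi, hBc⟩
    refine ⟨f ⁻¹' B ∩ t, Set.inter_subset_right, ?_, ?_⟩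
    · intro a b ha hb hab
      exact hBi ha.1 hb.1 ((hadj a b).2 hab)
    · intro a b c ha hb hc hab hbc hac
      have hmem : ∀ z : W, z ∈ t \ (f ⁻¹' B ∩ t) → f z ∈ f '' t \ B := by
        rintro z ⟨hz1, hz2⟩
        exact ⟨⟨z, hz1, rfl⟩, fun hzB => hz2 ⟨hzB, hz1⟩⟩
      exact (hadj a c).1 <| hBc (hmem a ha) (hmem b hb) (hmem c hc)
        ((hadj a b).2 hab) ((hadj b c).2 hbc) (fun h => hac (hf h))
  · rintro ⟨A, hAsub, hAi, hAc⟩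
    refine ⟨f '' A, Set.image_mono hAsub, ?_, ?_⟩
    · rintro _ _ ⟨a, ha, rfl⟩ ⟨b, hb, rfl⟩ hab
      exact hAi ha hb ((hadj a b).1 hab)
    · rw [← Set.image_diff hf]
      rintro _ _ _ ⟨a, ha, rfl⟩ ⟨b, hb, rfl⟩ ⟨c, hc, rfl⟩ hab hbc hac
      exact (hadj a c).2 <| hAc ha hb hc ((hadj a b).1 hab) ((hadj b c).1 hbc)
        (fun h => hac (congrArg f h))

include hf hadj in
lemma polarOn_map (t : Set W) : PolarOn G (f '' t) ↔ PolarOn H t := by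
  constructor
  · rintro ⟨B, hBsub, hBi, hBc⟩
    refine ⟨f ⁻¹' B ∩ t, Set.inter_subset_right, ?_, ?_⟩
    · intro a b c ha hb hc hab hbc hac h1 h2
      intro hGac
      apply hBi ha.1 hb.1 hc.1 (fun h => hab (hf h)) (fun h => hbc (hf h))
        (fun h => hac (hf h)) (fun h => h1 ((hadj a b).1 h)) (fun h => h2 ((hadj b c).1 h))
      exact (hadj a c).2 hGac
    · intro a b c ha hb hc hab hbc hac
      have hmem : ∀ z : W, z ∈ t \ (f ⁻¹' B ∩ t) → f z ∈ f '' t \ B := by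
        rintro z ⟨hz1, hz2⟩
        exact ⟨⟨z, hz1, rfl⟩, fun hzB => hz2 ⟨hzB, hz1⟩⟩
      exact (hadj a c).1 <| hBc (hmem a ha) (hmem b hb) (hmem c hc)
        ((hadj a b).2 hab) ((hadj b c).2 hbc) (fun h => hac (hf h))
  · rintro ⟨A, hAsub, hAi, hAc⟩
    refine ⟨f '' A, Set.image_mono hAsub, ?_, ?_⟩
    · rintro _ _ _ ⟨a, ha, rfl⟩ ⟨b, hb, rfl⟩ ⟨c, hc, rfl⟩ hab hbc hac h1 h2 hG
      exact hAi ha hb hc (fun h => hab (congrArg f h)) (fun h => hbc (congrArg f h))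
        (fun h => hac (congrArg f h)) (fun h => h1 ((hadj a b).2 h))
        (fun h => h2 ((hadj b c).2 h)) ((hadj a c).1 hG)
    · rw [← Set.image_diff hf]
      rintro _ _ _ ⟨a, ha, rfl⟩ ⟨b, hb, rfl⟩ ⟨c, hc, rfl⟩ hab hbc hac
      exact (hadj a c).2 <| hAc ha hb hc ((hadj a b).1 hab) ((hadj b c).1 hbc)
        (fun h => hac (congrArg f h))

end MapLemmas

lemma monopolar_induce_iff (s : Set V) : Monopolar (G.induce s) ↔ MonopolarOn G s := by
  rw [monopolar_iff_monopolarOn_univ,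
    ← monopolarOn_map (G := G) (H := G.induce s) Subtype.val Subtype.val_injective
      (fun a b => by simp) Set.univ, Set.image_univ, Subtype.range_coe]

lemma polar_induce_iff (s : Set V) : Polar (G.induce s) ↔ PolarOn G s := by
  rw [polar_iff_polarOn_univ,
    ← polarOn_map (G := G) (H := G.induce s) Subtype.val Subtype.val_injective
      (fun a b => by simp) Set.univ, Set.image_univ, Subtype.range_coe]

end Infra

section Core
variable {V W : Type*} {G : SimpleGraph V} {H : SimpleGraph W}

lemma CrossFree.symm {s t : Set V} (h : CrossFree G s t) : CrossFree G t s :=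
  fun u v hu hv hadj => h hv hu hadj.symm

lemma IsClusterSet.union {s t : Set V} (hcf : CrossFree G s t)
    (hs : IsClusterSet G s) (ht : IsClusterSet G t) : IsClusterSet G (s ∪ t) := by
  intro u w x hu hw hx huw hwx hux
  rcases hu with hu | hu
  · rcases hw with hw | hw
    · rcases hx with hx | hx
      · exact hs hu hw hx huw hwx hux
      · exact absurd hwx (hcf hw hx)
    · exact absurd huw (hcf hu hw)
  · rcases hw with hw | hw
    · exact absurd huw (hcf.symm hu hw)
    · rcases hx with hx | hx
      · exact absurd hwx (hcf.symm hw hx)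
      · exact ht hu hw hx huw hwx hux

lemma MonopolarOn.union {s t : Set V} (hcf : CrossFree G s t)
    (hs : MonopolarOn G s) (ht : MonopolarOn G t) : MonopolarOn G (s ∪ t) := by
  obtain ⟨A, hAs, hAi, hAc⟩ := hs
  obtain ⟨B, hBt, hBi, hBc⟩ := ht
  refine ⟨A ∪ B, Set.union_subset_union hAs hBt, ?_, ?_⟩
  · intro u w hu hw
    rcases hu with hu | hu <;> rcases hw with hw | hw
    · exact hAi hu hw
    · exact hcf (hAs hu) (hBt hw)
    · exact hcf.symm (hBt hu) (hAs hw)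
    · exact hBi hu hw
  · have hsub : (s ∪ t) \ (A ∪ B) ⊆ (s \ A) ∪ (t \ B) := by
      rintro z ⟨hz1 | hz1, hz2⟩
      · exact Or.inl ⟨hz1, fun h => hz2 (Or.inl h)⟩
      · exact Or.inr ⟨hz1, fun h => hz2 (Or.inr h)⟩
    exact ((hAc.union (fun u v hu hv => hcf hu.1 hv.1) hBc).mono hsub)

lemma PolarOn.union_of_cluster_left {s t : Set V} (hcf : CrossFree G s t)
    (hdisj : Disjoint s t) (hs : IsClusterSet G s) (ht : PolarOn G t) :
    PolarOn G (s ∪ t) := by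
  obtain ⟨A, hAt, hAcm, hAc⟩ := ht
  refine ⟨A, hAt.trans Set.subset_union_right, hAcm, ?_⟩
  have hsub : (s ∪ t) \ A ⊆ s ∪ (t \ A) := by
    rintro z ⟨hz1 | hz1, hz2⟩
    · exact Or.inl hz1
    · exact Or.inr ⟨hz1, hz2⟩
  refine (hs.union ?_ hAc).mono hsub
  exact fun u v hu hv => hcf hu hv.1

/-- Lemma B: if `s ∪ t` is polar, `s` and `t` are disjoint with no edges between them,
and `s` contains an induced `P3`, then `t` is monopolar. -/
lemma polarOn_union_p3 {s t : Set V} {u w x : V}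
    (hdisj : Disjoint s t) (hcf : CrossFree G s t)
    (hu : u ∈ s) (hw : w ∈ s) (hx : x ∈ s)
    (huw : G.Adj u w) (hwx : G.Adj w x) (hux : u ≠ x) (hnux : ¬ G.Adj u x)
    (hpol : PolarOn G (s ∪ t)) : MonopolarOn G t := by
  obtain ⟨A, hAsub, hAcm, hAc⟩ := hpol
  by_cases hAt : (A ∩ t).Nonempty
  · by_cases hAs : (A ∩ s).Nonempty
    · -- A meets both sides: A is independent
      have hindep : IsIndepSetG G A := by
        intro a b ha hb hab
        rcases hAsub ha with has | hat
        · rcases hAsub hb with hbs | hbt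
          · obtain ⟨c, hcA, hct⟩ := hAt
            have hac : a ≠ c := fun h => hdisj.ne_of_mem has hct h
            have hbc : b ≠ c := fun h => hdisj.ne_of_mem hbs hct h
            exact hAcm ha hcA hb hac (Ne.symm hbc) hab.ne
              (hcf has hct) (fun h => hcf hbs hct h.symm) hab
          · exact hcf has hbt hab
        · rcases hAsub hb with hbs | hbt
          · exact hcf hbs hat hab.symm
          · obtain ⟨c, hcA, hcs⟩ := hAs
            have hac : a ≠ c := fun h => hdisj.ne_of_mem hcs hat h.symm
            have hbc : b ≠ c := fun h => hdisj.ne_of_mem hcs hbt h.symm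
            exact hAcm ha hcA hb hac (Ne.symm hbc) hab.ne
              (fun h => hcf hcs hat h.symm) (hcf hcs hbt) hab
      refine ⟨A ∩ t, Set.inter_subset_right, hindep.mono Set.inter_subset_left, ?_⟩
      refine hAc.mono ?_
      rintro z ⟨hz1, hz2⟩
      exact ⟨Or.inr hz1, fun h => hz2 ⟨h, hz1⟩⟩
    · -- A ⊆ t : then s ⊆ (s∪t)\A is a cluster, contradicting the induced P3
      have hss : s ⊆ (s ∪ t) \ A := by
        intro z hz
        exact ⟨Or.inl hz, fun h => hAs ⟨z, h, hz⟩⟩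
      exact absurd ((hAc.mono hss) hu hw hx huw hwx hux) hnux
  · -- A ⊆ s : then t ⊆ (s∪t)\A is a cluster
    have hts : t ⊆ (s ∪ t) \ A := by
      intro z hz
      exact ⟨Or.inr hz, fun h => hAt ⟨z, h, hz⟩⟩
    exact (hAc.mono hts).monopolarOn

lemma not_clusterSet_witness {s : Set V} (h : ¬ IsClusterSet G s) :
    ∃ u ∈ s, ∃ w ∈ s, ∃ x ∈ s, G.Adj u w ∧ G.Adj w x ∧ u ≠ x ∧ ¬ G.Adj u x := by
  by_contra hc
  push_neg at hc
  exact h fun u w x hu hw hx huw hwx hux => hc u hu w hw x hx huw hwx hux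


lemma forward_main {D : Set V}
    (hne : D.Nonempty) (hcf : CrossFree G D Dᶜ)
    (hmono : ¬ MonopolarOn G Dᶜ) (hmin : MinPolarObstruction G) :
    ∃ u w x : V, D = {u, w, x} ∧ G.Adj u w ∧ G.Adj w x ∧ u ≠ x ∧ ¬ G.Adj u x := by
  obtain ⟨d₀, hd₀⟩ := hne
  have hDcne : Dᶜ ≠ Set.univ := by
    intro h
    exact (h.symm ▸ Set.mem_univ d₀ : d₀ ∈ Dᶜ) hd₀
  have hDnc : ¬ IsClusterSet G D := by
    intro hclus
    have hpolc : PolarOn G Dᶜ := (polar_induce_iff _).1 (hmin.2 _ hDcne)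
    have : PolarOn G (D ∪ Dᶜ) :=
      PolarOn.union_of_cluster_left hcf disjoint_compl_right hclus hpolc
    rw [Set.union_compl_self] at this
    exact hmin.1 (polar_iff_polarOn_univ.2 this)
  obtain ⟨u, hu, w, hw, x, hx, huw, hwx, hux, hnux⟩ := not_clusterSet_witness hDnc
  have hsub : ({u, w, x} : Set V) ⊆ D := by
    rintro z (rfl | rfl | rfl) <;> assumption
  have hsub2 : D ⊆ ({u, w, x} : Set V) := by
    intro d hd
    by_contra hdn
    have hsne : ({u, w, x} : Set V) ∪ Dᶜ ≠ Set.univ := by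
      intro h
      have : d ∈ ({u, w, x} : Set V) ∪ Dᶜ := h.symm ▸ Set.mem_univ d
      rcases this with h' | h'
      · exact hdn h'
      · exact h' hd
    have hpol : PolarOn G (({u, w, x} : Set V) ∪ Dᶜ) :=
      (polar_induce_iff _).1 (hmin.2 _ hsne)
    refine hmono (polarOn_union_p3 ?_ ?_
      (by simp) (by simp) (by simp) huw hwx hux hnux hpol)
    · exact (Set.disjoint_compl_right_iff_subset.2 hsub)
    · exact fun a b ha hb => hcf (hsub ha) hb
  exact ⟨u, w, x, le_antisymm hsub2 hsub, huw, hwx, hux, hnux⟩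

/-- Congruence of disjoint sums under isomorphisms. -/
def sumCongrIso {α β α' β' : Type*} {G1 : SimpleGraph α} {G1' : SimpleGraph α'}
    {G2 : SimpleGraph β} {G2' : SimpleGraph β'}
    (e1 : G1 ≃g G1') (e2 : G2 ≃g G2') : (G1 ⊕g G2) ≃g (G1' ⊕g G2') := by
  refine ⟨Equiv.sumCongr e1.toEquiv e2.toEquiv, ?_⟩
  rintro (a | a) (b | b) <;> simp [e1.map_rel_iff, e2.map_rel_iff]

/-- If `D` is a union of components, `G` is the disjoint sum of its two induced parts. -/
noncomputable def isoSumCompl (D : Set V) (hcf : CrossFree G D Dᶜ) :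
    (G.induce D ⊕g G.induce Dᶜ) ≃g G := by
  classical
  refine ⟨Equiv.Set.sumCompl D, ?_⟩
  rintro (a | a) (b | b)
  · simp
  · simpa using fun h => hcf a.2 b.2 h
  · simpa using fun h => hcf b.2 a.2 h.symm
  · simp

/-- An induced `P3` gives an isomorphism with `pathGraph 3`. -/
noncomputable def isoP3 {u w x : V} (huw : G.Adj u w) (hwx : G.Adj w x)
    (hux : u ≠ x) (hnux : ¬ G.Adj u x) :
    pathGraph 3 ≃g G.induce ({u, w, x} : Set V) := by
  classical
  have huw' : u ≠ w := huw.ne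
  have hwx' : w ≠ x := hwx.ne
  refine ⟨⟨![⟨u, by simp⟩, ⟨w, by simp⟩, ⟨x, by simp⟩],
    fun y => if (y : V) = u then 0 else if (y : V) = w then 1 else 2, ?_, ?_⟩, ?_⟩
  · intro i
    fin_cases i <;> simp [huw', huw'.symm, hwx', hwx'.symm, hux, hux.symm]
  · rintro ⟨y, hy⟩
    rcases hy with rfl | rfl | rfl <;>
      simp [huw', huw'.symm, hwx', hux, hux.symm, hwx'.symm]
  · have hnxu : ¬ G.Adj x u := fun h => hnux h.symm
    intro i j
    fin_cases i <;> fin_cases j <;>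
      simp [pathGraph_adj, huw, hwx, hnux, huw.symm, hwx.symm, hnxu, G.irrefl]

/-! ### Iso invariance -/

lemma polar_iff_of_iso (e : G ≃g H) : Polar G ↔ Polar H := by
  rw [polar_iff_polarOn_univ, polar_iff_polarOn_univ,
    ← polarOn_map (G := H) (H := G) e.toEquiv e.toEquiv.injective
      (fun a b => e.map_rel_iff) Set.univ, Set.image_univ, Equiv.range_eq_univ]

lemma polar_induce_iso (e : G ≃g H) (s : Set V) :
    Polar (G.induce s) ↔ Polar (H.induce (e.toEquiv '' s)) := by
  rw [polar_induce_iff, polar_induce_iff,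
    polarOn_map (G := H) (H := G) e.toEquiv e.toEquiv.injective
      (fun a b => e.map_rel_iff) s]

lemma minPolar_of_iso (e : G ≃g H) (h : MinPolarObstruction H) : MinPolarObstruction G := by
  refine ⟨fun hp => h.1 ((polar_iff_of_iso e).1 hp), fun s hs => ?_⟩
  have himg : e.toEquiv '' s ≠ Set.univ := by
    intro hcon
    apply hs
    rw [Set.eq_univ_iff_forall]
    intro v
    have : e.toEquiv v ∈ e.toEquiv '' s := hcon.symm ▸ Set.mem_univ _
    obtain ⟨a, ha, hav⟩ := this
    rwa [← e.toEquiv.injective hav]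
  rw [polar_induce_iso e s]
  exact h.2 _ himg

lemma preconnected_of_iso (e : G ≃g H) (h : G.Preconnected) : H.Preconnected := by
  intro a b
  have := (h (e.symm a) (e.symm b)).map e.toHom
  simpa using this

/-! ### Forward assembly -/

lemma forward_with {V : Type} [Fintype V] {G : SimpleGraph V} (D : Set V)
    (hne : D.Nonempty) (hcf : CrossFree G D Dᶜ)
    (hmono : ¬ MonopolarOn G Dᶜ) (hmin : MinPolarObstruction G) :
    ∃ (W : Type) (_ : Fintype W) (H : SimpleGraph W),
      MinMonopolarObstruction H ∧ ¬ MinPolarObstruction H ∧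
      Nonempty (G ≃g (pathGraph 3 ⊕g H)) := by
  obtain ⟨u, w, x, hD, huw, hwx, hux, hnux⟩ := forward_main hne hcf hmono hmin
  subst hD
  set D : Set V := {u, w, x} with hDdef
  have hmemD : ∀ z : V, z ∈ D ↔ (z = u ∨ z = w ∨ z = x) := fun z => by simp [hDdef]
  refine ⟨↥Dᶜ, Fintype.ofFinite _, G.induce Dᶜ, ⟨?_, ?_⟩, ?_, ?_⟩
  · rwa [monopolar_induce_iff]
  · intro t ht
    rw [monopolar_induce_iff]
    rw [← monopolarOn_map (G := G) (H := G.induce Dᶜ) Subtype.val Subtype.val_injective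
      (fun a b => by simp) t]
    -- find a vertex of Dᶜ outside t
    obtain ⟨z, hz⟩ : ∃ z : ↥Dᶜ, z ∉ t := by
      by_contra hcon
      push_neg at hcon
      exact ht (Set.eq_univ_iff_forall.2 hcon)
    have htsub : Subtype.val '' t ⊆ Dᶜ := by
      rintro _ ⟨a, _, rfl⟩; exact a.2
    have hsne : D ∪ Subtype.val '' t ≠ Set.univ := by
      intro hcon
      have : (z : V) ∈ D ∪ Subtype.val '' t := hcon.symm ▸ Set.mem_univ _
      rcases this with h' | h'
      · exact z.2 h'
      · obtain ⟨a, ha, hav⟩ := h'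
        rw [Subtype.val_injective hav] at ha
        exact hz ha
    have hpol : PolarOn G (D ∪ Subtype.val '' t) :=
      (polar_induce_iff _).1 (hmin.2 _ hsne)
    refine polarOn_union_p3 ?_ (fun a b ha hb => hcf ha (htsub hb)) ?_ ?_ ?_
      huw hwx hux hnux hpol
    · exact disjoint_compl_right.mono_right htsub
    all_goals simp [hDdef]
  · intro hc
    apply hc.1
    rw [polar_induce_iff]
    have hDcne : Dᶜ ≠ Set.univ := by
      intro hcon
      have : u ∈ Dᶜ := hcon.symm ▸ Set.mem_univ _
      exact this (by simp [hDdef])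
    exact (polar_induce_iff _).1 (hmin.2 _ hDcne)
  · exact ⟨((sumCongrIso (isoP3 huw hwx hux hnux) (RelIso.refl (G.induce Dᶜ).Adj)).trans
      (isoSumCompl D hcf)).symm⟩

/-! ### Backward direction -/

lemma sum_reachable_side {α β : Type*} {G1 : SimpleGraph α} {G2 : SimpleGraph β}
    {a b : α ⊕ β} (h : (G1 ⊕g G2).Reachable a b) : a.isLeft = b.isLeft := by
  obtain ⟨p⟩ := h
  induction p with
  | nil => rfl
  | @cons u v w hadj p ih =>
    have huv : u.isLeft = v.isLeft := by
      cases u <;> cases v <;> simp_all [sum_adj]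
    exact huv.trans ih

lemma sum_inr_adj {α β : Type*} {G1 : SimpleGraph α} {G2 : SimpleGraph β} (a b : β) :
    (G1 ⊕g G2).Adj (Sum.inr a) (Sum.inr b) ↔ G2.Adj a b := by simp [sum_adj]

lemma backward_main {W : Type*} (H : SimpleGraph W) (hH : MinMonopolarObstruction H)
    (hHpolar : Polar H) :
    ¬ (pathGraph 3 ⊕g H).Preconnected ∧ MinPolarObstruction (pathGraph 3 ⊕g H) := by
  set G' : SimpleGraph (Fin 3 ⊕ W) := pathGraph 3 ⊕g H with hG'
  have hWne : Nonempty W := by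
    by_contra h
    haveI : IsEmpty W := not_nonempty_iff.1 h
    exact hH.1 ⟨∅, fun u => isEmptyElim u, fun u => isEmptyElim u⟩
  -- basic adjacency facts
  have h01 : G'.Adj (Sum.inl 0) (Sum.inl 1) := by simp [hG', sum_adj, pathGraph_adj]
  have h12 : G'.Adj (Sum.inl 1) (Sum.inl 2) := by simp [hG', sum_adj, pathGraph_adj]
  have h02 : ¬ G'.Adj (Sum.inl 0) (Sum.inl 2) := by simp [hG', sum_adj, pathGraph_adj]
  have hne02 : (Sum.inl 0 : Fin 3 ⊕ W) ≠ Sum.inl 2 := by simp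
  have hcfLR : CrossFree G' (Set.range (Sum.inl : Fin 3 → Fin 3 ⊕ W))
      (Set.range (Sum.inr : W → Fin 3 ⊕ W)) := by
    rintro _ _ ⟨i, rfl⟩ ⟨z, rfl⟩ hadj
    simpa [hG', sum_adj] using hadj
  have hdisjLR : Disjoint (Set.range (Sum.inl : Fin 3 → Fin 3 ⊕ W))
      (Set.range (Sum.inr : W → Fin 3 ⊕ W)) := by
    rw [Set.disjoint_left]
    rintro _ ⟨i, rfl⟩ ⟨z, hz⟩
    exact Sum.inl_ne_inr hz.symm
  have hadjr : ∀ a b : W, G'.Adj (Sum.inr a) (Sum.inr b) ↔ H.Adj a b :=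
    fun a b => by simp [hG', sum_adj]
  constructor
  · intro hcon
    have := sum_reachable_side (hcon (Sum.inl 0) (Sum.inr (Classical.arbitrary W)))
    simp at this
  constructor
  · intro hp
    rw [polar_iff_polarOn_univ] at hp
    have huniv : (Set.univ : Set (Fin 3 ⊕ W)) =
        Set.range (Sum.inl : Fin 3 → Fin 3 ⊕ W) ∪ Set.range Sum.inr := by
      ext z; cases z <;> simp
    rw [huniv] at hp
    have hmono : MonopolarOn G' (Set.range (Sum.inr : W → Fin 3 ⊕ W)) :=
      polarOn_union_p3 hdisjLR hcfLR ⟨0, rfl⟩ ⟨1, rfl⟩ ⟨2, rfl⟩ h01 h12 hne02 h02 hp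
    rw [← Set.image_univ] at hmono
    rw [monopolarOn_map (G := G') (H := H) Sum.inr Sum.inr_injective hadjr] at hmono
    exact hH.1 (monopolar_iff_monopolarOn_univ.2 hmono)
  · intro s hs
    rw [polar_induce_iff]
    set sl := s ∩ Set.range (Sum.inl : Fin 3 → Fin 3 ⊕ W) with hsl
    set tW := Sum.inr ⁻¹' s with htWdef
    have hsrimg : s ∩ Set.range (Sum.inr : W → Fin 3 ⊕ W) = Sum.inr '' tW := by
      ext z
      constructor
      · rintro ⟨hz1, z', rfl⟩
        exact ⟨z', hz1, rfl⟩
      · rintro ⟨z', hz', rfl⟩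
        exact ⟨hz', z', rfl⟩
    have hs_union : s = sl ∪ Sum.inr '' tW := by
      rw [← hsrimg]
      ext z
      cases z with
      | inl i => simp [hsl]
      | inr z' => simp [hsl]
    have hcf' : CrossFree G' sl (Sum.inr '' tW) := by
      intro a b ha hb
      refine hcfLR ha.2 ?_
      rw [← hsrimg] at hb
      exact hb.2
    have hdisj' : Disjoint sl (Sum.inr '' tW) := by
      rw [← hsrimg]
      exact (hdisjLR.mono Set.inter_subset_right Set.inter_subset_right)
    by_cases htW : tW = Set.univ
    · -- all of `W` is in `s`; a left vertex is missing
      obtain ⟨z, hz⟩ : ∃ z, z ∉ s := by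
        by_contra hcon
        push_neg at hcon
        exact hs (Set.eq_univ_iff_forall.2 hcon)
      obtain ⟨i, rfl⟩ : ∃ i, z = Sum.inl i := by
        cases z with
        | inl i => exact ⟨i, rfl⟩
        | inr z' => exact absurd (htW ▸ Set.mem_univ z' : z' ∈ tW) hz
      have hclus : IsClusterSet G' sl := by
        intro a b c ha hb hc hab hbc hac
        exfalso
        obtain ⟨ia, rfl⟩ := ha.2
        obtain ⟨ib, rfl⟩ := hb.2
        obtain ⟨ic, rfl⟩ := hc.2
        rw [hG'] at hab hbc
        simp only [sum_adj, pathGraph_adj] at hab hbc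
        have hia : ia ≠ i := fun h => hz (h ▸ ha.1)
        have hib : ib ≠ i := fun h => hz (h ▸ hb.1)
        have hic : ic ≠ i := fun h => hz (h ▸ hc.1)
        have hac' : ia ≠ ic := fun h => hac (h ▸ rfl)
        have l1 := ia.is_lt; have l2 := ib.is_lt; have l3 := ic.is_lt; have l4 := i.is_lt
        rw [Fin.ne_iff_vne] at hia hib hic hac'
        omega
      have hsr : PolarOn G' (Sum.inr '' tW) := by
        rw [htW, ← Set.image_univ] at *
        rw [polarOn_map (G := G') (H := H) Sum.inr Sum.inr_injective hadjr]
        exact polar_iff_polarOn_univ.1 hHpolar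
      rw [hs_union]
      exact PolarOn.union_of_cluster_left hcf' hdisj' hclus hsr
    · -- a right vertex is missing: both sides are monopolar
      have hsrmono : MonopolarOn G' (Sum.inr '' tW) := by
        rw [monopolarOn_map (G := G') (H := H) Sum.inr Sum.inr_injective hadjr]
        rw [← monopolar_induce_iff]
        exact hH.2 tW htW
      have hslmono : MonopolarOn G' sl := by
        refine ⟨sl ∩ {Sum.inl 1}, Set.inter_subset_left, ?_, ?_⟩
        · intro a b ha hb hab
          rw [ha.2, hb.2] at hab
          exact G'.irrefl hab
        · intro a b c ha hb hc hab hbc hac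
          exfalso
          obtain ⟨ia, rfl⟩ := ha.1.2
          obtain ⟨ib, rfl⟩ := hb.1.2
          rw [hG'] at hab
          simp only [sum_adj, pathGraph_adj] at hab
          have hia : ia ≠ 1 := fun h => ha.2 ⟨ha.1, by simp [h]⟩
          have hib : ib ≠ 1 := fun h => hb.2 ⟨hb.1, by simp [h]⟩
          have l1 := ia.is_lt; have l2 := ib.is_lt
          rw [Fin.ne_iff_vne] at hia hib
          simp only [Fin.val_one] at hia hib
          omega
      rw [hs_union]
      exact (hslmono.union hcf' hsrmono).polarOn

/-- A finite graph `G` is a disconnected minimal polar obstruction iff `G` is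
isomorphic to `P_3 + H` with `H` a minimal monopolar obstruction which is not a minimal polar
obstruction. -/
theorem stmt_15 {V : Type} [Fintype V] (G : SimpleGraph V) :
    (¬ G.Preconnected ∧ MinPolarObstruction G) ↔
      ∃ (W : Type) (_ : Fintype W) (H : SimpleGraph W),
        MinMonopolarObstruction H ∧ ¬ MinPolarObstruction H ∧
        Nonempty (G ≃g (pathGraph 3 ⊕g H)) := by
  constructor
  · rintro ⟨hpre, hmin⟩
    simp only [SimpleGraph.Preconnected, not_forall] at hpre
    obtain ⟨v₀, w₀, hnr⟩ := hpre
    set D₀ : Set V := {y | G.Reachable v₀ y} with hD₀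
    have hcf₀ : CrossFree G D₀ D₀ᶜ := fun a b ha hb hadj => hb (ha.trans hadj.reachable)
    have hv₀ : v₀ ∈ D₀ := Reachable.refl v₀
    have hw₀ : w₀ ∈ D₀ᶜ := hnr
    have hnb : ¬ (MonopolarOn G D₀ ∧ MonopolarOn G D₀ᶜ) := by
      rintro ⟨h1, h2⟩
      apply hmin.1
      apply Monopolar.polar
      rw [monopolar_iff_monopolarOn_univ, ← Set.union_compl_self D₀]
      exact h1.union hcf₀ h2
    rcases not_and_or.1 hnb with h | h
    · refine forward_with D₀ᶜ ⟨w₀, hw₀⟩ ?_ ?_ hmin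
      · rw [compl_compl]; exact hcf₀.symm
      · rwa [compl_compl]
    · exact forward_with D₀ ⟨v₀, hv₀⟩ hcf₀ h hmin
  · rintro ⟨W, instW, H, hH, hHnpo, ⟨e⟩⟩
    have hHpolar : Polar H := by
      by_contra hnp
      exact hHnpo ⟨hnp, fun t ht => (hH.2 t ht).polar⟩
    obtain ⟨hpre', hmin'⟩ := backward_main H hH hHpolar
    exact ⟨fun h => hpre' (preconnected_of_iso e h), minPolar_of_iso e hmin'⟩
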